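/- Let d ≥ 1 and let b : [0,∞)^d → ℝ satisfy Assumption (A). For τ > 0 set P_τ = {ν ∈ [0,∞)^d : b(ν) ≤ τ}, and let P = ⋂_{τ>0} (1/τ)P_τ in the increasing case (respectively P = ⋃_{τ>0} (1/τ)P_τ in the decreasing case). Then 0 < |P| < ∞ (where |P| is the Lebesgue outer measure of P). Moreover, if P is Jordan measurable, then |P| = lim_{τ→∞} τ^{−d} · #( P_τ ∩ ℤ^d ), where #(P_τ ∩ ℤ^d) denotes the (finite) number of integer lattice points contained in P_τ. -/

import Mathlib

open MeasureTheory Real Filter Pointwise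

noncomputable section

/-- Embedding of a multi-index `ν ∈ ℕ^d` into `ℝ^d`. -/
def nuR {d : ℕ} (ν : Fin d → ℕ) : Fin d → ℝ := fun i => (ν i : ℝ)

/-- Euclidean norm on `ℝ^d` (viewed as `Fin d → ℝ`). -/
def eNorm {d : ℕ} (x : Fin d → ℝ) : ℝ := Real.sqrt (∑ i, x i ^ 2)

/-- `τ ↦ b(τν)/τ` is increasing on `(0,∞)` for every nonnegative `ν`. -/
def IsIncreasingCase {d : ℕ} (b : (Fin d → ℝ) → ℝ) : Prop :=
  ∀ ν : Fin d → ℝ, (∀ i, 0 ≤ ν i) → MonotoneOn (fun τ : ℝ => b (τ • ν) / τ) (Set.Ioi 0)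

/-- `τ ↦ b(τν)/τ` is decreasing on `(0,∞)` for every nonnegative `ν`. -/
def IsDecreasingCase {d : ℕ} (b : (Fin d → ℝ) → ℝ) : Prop :=
  ∀ ν : Fin d → ℝ, (∀ i, 0 ≤ ν i) → AntitoneOn (fun τ : ℝ => b (τ • ν) / τ) (Set.Ioi 0)

/-- Assumption (A) on the exponent map `b : [0,∞)^d → ℝ`. -/
def AssumptionA {d : ℕ} (b : (Fin d → ℝ) → ℝ) : Prop :=
  b 0 = 0 ∧ ContinuousOn b {x | ∀ i, 0 ≤ x i} ∧
  (IsIncreasingCase b ∨ IsDecreasingCase b) ∧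
  ∃ c C : ℝ, 0 < c ∧ c < C ∧ ∃ R : ℝ, ∀ x : Fin d → ℝ, (∀ i, 0 ≤ x i) → R ≤ eNorm x →
    c * eNorm x ≤ b x ∧ b x ≤ C * eNorm x

/-- `P_τ = {ν ∈ [0,∞)^d : b(ν) ≤ τ}`. -/
def Pset {d : ℕ} (b : (Fin d → ℝ) → ℝ) (τ : ℝ) : Set (Fin d → ℝ) :=
  {x | (∀ i, 0 ≤ x i) ∧ b x ≤ τ}

/-- The set of integer lattice points of `ℝ^d`. -/
def latticePoints (d : ℕ) : Set (Fin d → ℝ) :=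
  Set.range (fun z : Fin d → ℤ => fun i => (z i : ℝ))

open Metric Bornology
open scoped ENNReal

variable {d : ℕ}

/-! ### Lattice point counting lemmas -/

lemma latticeFinite {B : Set (Fin d → ℝ)} (hB : IsBounded B) :
    (B ∩ latticePoints d).Finite := by
  obtain ⟨r, hr⟩ := hB.subset_closedBall 0
  set N : ℤ := ⌈r⌉
  have h : (B ∩ latticePoints d) ⊆
      (fun z : Fin d → ℤ => fun i => (z i : ℝ)) '' (Set.univ.pi fun _ => Set.Icc (-N) N) := by
    rintro x ⟨hxB, z, rfl⟩
    refine ⟨z, fun i _ => ?_, rfl⟩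
    have hx := hr hxB
    rw [mem_closedBall, dist_zero_right] at hx
    have : |(z i : ℝ)| ≤ r := by
      have := norm_le_pi_norm (fun i => (z i : ℝ)) i
      simpa using this.trans hx
    have : |(z i : ℝ)| ≤ (N : ℝ) := this.trans (Int.le_ceil r)
    rw [abs_le] at this
    constructor
    · exact_mod_cast this.1
    · exact_mod_cast this.2
  exact Set.Finite.subset (Set.Finite.image _ (Set.Finite.pi fun _ => Set.finite_Icc _ _)) h

/-- The half-open unit cube based at `a`. -/
def cube (a : Fin d → ℝ) : Set (Fin d → ℝ) := Set.univ.pi fun i => Set.Ico (a i) (a i + 1)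

lemma cube_measurable (a : Fin d → ℝ) : MeasurableSet (cube a) :=
  MeasurableSet.univ_pi fun _ => measurableSet_Ico

lemma volume_cube (a : Fin d → ℝ) : volume (cube a) = 1 := by
  rw [cube, volume_pi_pi]
  simp

lemma cube_disjoint {a b : Fin d → ℝ} (ha : a ∈ latticePoints d) (hb : b ∈ latticePoints d)
    (hab : a ≠ b) : Disjoint (cube a) (cube b) := by
  rw [Set.disjoint_left]
  rintro x hxa hxb
  obtain ⟨za, rfl⟩ := ha
  obtain ⟨zb, rfl⟩ := hb
  apply hab
  funext i
  have h1 := hxa i (Set.mem_univ i)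
  have h2 := hxb i (Set.mem_univ i)
  simp only [Set.mem_Ico] at h1 h2
  have e1 : ⌊x i⌋ = za i := by
    rw [Int.floor_eq_iff]
    constructor
    · exact h1.1
    · push_cast
      exact h1.2
  have e2 : ⌊x i⌋ = zb i := by
    rw [Int.floor_eq_iff]
    constructor
    · exact h2.1
    · push_cast
      exact h2.2
  show ((za i : ℝ)) = zb i
  rw [← e1, e2]

lemma dist_lt_one_of_mem_cube {a x : Fin d → ℝ} (hx : x ∈ cube a) :
    dist x a < 1 := by
  rw [dist_pi_lt_iff one_pos]
  intro i
  have := hx i (Set.mem_univ i)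
  simp only [Set.mem_Ico] at this
  rw [Real.dist_eq, abs_lt]
  constructor <;> linarith [this.1, this.2]

/-- The number of lattice points in `A` is at most the volume of the 1-thickening of `A`. -/
lemma card_le_volume_thickening {A : Set (Fin d → ℝ)} (hA : IsBounded A) :
    ((A ∩ latticePoints d).ncard : ℝ≥0∞) ≤ volume (thickening 1 A) := by
  have hfin := latticeFinite hA
  classical
  set F := hfin.toFinset with hF
  have hsub : ∀ a ∈ F, cube a ⊆ thickening 1 A := by
    intro a haF y hy
    rw [hF, Set.Finite.mem_toFinset] at haF
    exact Metric.mem_thickening_iff.mpr ⟨a, haF.1, dist_lt_one_of_mem_cube hy⟩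
  have hdisj : (F : Set (Fin d → ℝ)).PairwiseDisjoint cube := by
    intro a ha b hb hab
    rw [hF, Finset.mem_coe, Set.Finite.mem_toFinset] at ha hb
    exact cube_disjoint ha.2 hb.2 hab
  calc ((A ∩ latticePoints d).ncard : ℝ≥0∞) = ∑ a ∈ F, volume (cube a) := by
        simp only [volume_cube, Finset.sum_const, nsmul_eq_mul, mul_one]
        rw [Set.ncard_eq_toFinset_card _ hfin]
      _ = volume (⋃ a ∈ F, cube a) :=
        (measure_biUnion_finset hdisj fun a _ => cube_measurable a).symm
      _ ≤ volume (thickening 1 A) := measure_mono (Set.iUnion₂_subset hsub)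

/-- The volume of `A` is at most the number of lattice points in its 1-thickening. -/
lemma volume_le_card_thickening {A : Set (Fin d → ℝ)} (hA : IsBounded A) :
    volume A ≤ ((thickening 1 A ∩ latticePoints d).ncard : ℝ≥0∞) := by
  have hfin := latticeFinite (hA.thickening (δ := 1))
  classical
  set F := hfin.toFinset with hF
  have hcover : A ⊆ ⋃ a ∈ F, cube a := by
    intro x hx
    set a : Fin d → ℝ := fun i => (⌊x i⌋ : ℝ) with ha
    have hxa : x ∈ cube a := by
      intro i _
      simp only [ha, Set.mem_Ico]
      exact ⟨Int.floor_le _, Int.lt_floor_add_one _⟩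
    have haF : a ∈ F := by
      rw [hF, Set.Finite.mem_toFinset]
      refine ⟨Metric.mem_thickening_iff.mpr ⟨x, hx, ?_⟩, ⟨fun i => ⌊x i⌋, rfl⟩⟩
      rw [dist_comm]
      exact dist_lt_one_of_mem_cube hxa
    exact Set.mem_biUnion haF hxa
  calc volume A ≤ volume (⋃ a ∈ F, cube a) := measure_mono hcover
    _ ≤ ∑ a ∈ F, volume (cube a) := measure_biUnion_finset_le F cube
    _ = ((thickening 1 A ∩ latticePoints d).ncard : ℝ≥0∞) := by
        simp only [volume_cube, Finset.sum_const, nsmul_eq_mul, mul_one]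
        rw [Set.ncard_eq_toFinset_card _ hfin]

lemma volume_smul (r : ℝ) (hr : 0 ≤ r) (s : Set (Fin d → ℝ)) :
    volume (r • s) = ENNReal.ofReal (r ^ d) * volume s := by
  rw [Measure.addHaar_smul_of_nonneg volume hr s]
  simp

lemma count_upper {S : Set (Fin d → ℝ)} (hS : IsBounded S) {τ δ : ℝ}
    (hτ : 0 < τ) (hδ : 1 / τ ≤ δ) :
    (((τ • S) ∩ latticePoints d).ncard : ℝ≥0∞) ≤
      ENNReal.ofReal (τ ^ d) * volume (thickening δ S) := by
  have hbdd : IsBounded (τ • S) := hS.smul₀ τ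
  refine (card_le_volume_thickening hbdd).trans ?_
  have hsub : thickening 1 (τ • S) ⊆ τ • thickening δ S := by
    intro y hy
    obtain ⟨x, hx, hxy⟩ := Metric.mem_thickening_iff.mp hy
    obtain ⟨x', hx', rfl⟩ := hx
    refine ⟨τ⁻¹ • y, Metric.mem_thickening_iff.mpr ⟨x', hx', ?_⟩, smul_inv_smul₀ hτ.ne' y⟩
    have h3 : dist (τ⁻¹ • y) (τ⁻¹ • (τ • x')) = ‖τ⁻¹‖ * dist y (τ • x') :=
      dist_smul₀ _ _ _
    rw [inv_smul_smul₀ hτ.ne'] at h3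
    rw [h3, Real.norm_eq_abs, abs_of_nonneg (inv_nonneg.mpr hτ.le)]
    calc τ⁻¹ * dist y (τ • x') < τ⁻¹ * 1 := by
          apply mul_lt_mul_of_pos_left hxy (inv_pos.mpr hτ)
      _ = 1 / τ := by ring
      _ ≤ δ := hδ
  refine (measure_mono hsub).trans ?_
  rw [volume_smul τ hτ.le]

lemma count_lower {S : Set (Fin d → ℝ)} (hS : IsBounded S) {τ δ : ℝ}
    (hτ : 0 < τ) (hδ : 1 / τ ≤ δ) :
    ENNReal.ofReal (τ ^ d) * volume {x | δ ≤ infDist x Sᶜ} ≤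
      (((τ • S) ∩ latticePoints d).ncard : ℝ≥0∞) := by
  have hδ0 : 0 < δ := lt_of_lt_of_le (by positivity) hδ
  set E : Set (Fin d → ℝ) := {x | δ ≤ infDist x Sᶜ} with hE
  have hES : E ⊆ S := by
    intro x hx
    by_contra h
    have : infDist x Sᶜ = 0 := infDist_zero_of_mem h
    rw [hE, Set.mem_setOf_eq, this] at hx
    exact absurd hx (not_le.mpr hδ0)
  have hEb : IsBounded E := hS.subset hES
  have key : thickening 1 (τ • E) ⊆ τ • S := by
    intro y hy
    obtain ⟨x, hx, hxy⟩ := Metric.mem_thickening_iff.mp hy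
    obtain ⟨x', hx', rfl⟩ := hx
    refine ⟨τ⁻¹ • y, ?_, smul_inv_smul₀ hτ.ne' y⟩
    by_contra h
    have h1 : infDist x' Sᶜ ≤ dist x' (τ⁻¹ • y) := infDist_le_dist_of_mem h
    have h2 : dist x' (τ⁻¹ • y) < δ := by
      have h3 : dist (τ⁻¹ • (τ • x')) (τ⁻¹ • y) = ‖τ⁻¹‖ * dist (τ • x') y :=
        dist_smul₀ _ _ _
      rw [inv_smul_smul₀ hτ.ne'] at h3
      rw [h3, Real.norm_eq_abs, abs_of_nonneg (inv_nonneg.mpr hτ.le), dist_comm]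
      calc τ⁻¹ * dist y (τ • x') < τ⁻¹ * 1 := by
            apply mul_lt_mul_of_pos_left hxy (inv_pos.mpr hτ)
        _ = 1 / τ := by ring
        _ ≤ δ := hδ
    exact absurd hx' (not_le.mpr (lt_of_le_of_lt h1 h2))
  calc ENNReal.ofReal (τ ^ d) * volume E = volume (τ • E) := (volume_smul τ hτ.le E).symm
    _ ≤ ((thickening 1 (τ • E) ∩ latticePoints d).ncard : ℝ≥0∞) :=
        volume_le_card_thickening (hEb.smul₀ τ)
    _ ≤ (((τ • S) ∩ latticePoints d).ncard : ℝ≥0∞) := by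
        have := Set.ncard_le_ncard (Set.inter_subset_inter_left (latticePoints d) key)
          (latticeFinite (hS.smul₀ τ))
        exact_mod_cast this

lemma tendsto_E (hd : 1 ≤ d) {S : Set (Fin d → ℝ)} (hS : IsBounded S) :
    Tendsto (fun n : ℕ => volume {x : Fin d → ℝ | 1 / (n + 1) ≤ infDist x Sᶜ}) atTop
      (nhds (volume (interior S))) := by
  have hne : Sᶜ.Nonempty := by
    have : Nonempty (Fin d) := Fin.pos_iff_nonempty.mp hd
    obtain ⟨r, hr⟩ := hS.subset_closedBall 0
    refine ⟨fun _ => |r| + 1, fun h => ?_⟩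
    have := hr h
    rw [mem_closedBall, dist_zero_right] at this
    rw [pi_norm_const, Real.norm_eq_abs,
      abs_of_pos (show (0:ℝ) < |r| + 1 by positivity)] at this
    have := le_abs_self r
    linarith
  have hmono : Monotone (fun n : ℕ => {x : Fin d → ℝ | 1 / (n + 1) ≤ infDist x Sᶜ}) := by
    intro n m hnm x hx
    simp only [Set.mem_setOf_eq] at hx ⊢
    refine le_trans ?_ hx
    apply one_div_le_one_div_of_le (by positivity)
    have : (n : ℝ) ≤ m := by exact_mod_cast hnm
    linarith
  have hU : (⋃ n : ℕ, {x : Fin d → ℝ | 1 / (n + 1) ≤ infDist x Sᶜ}) = interior S := by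
    ext x
    simp only [Set.mem_iUnion, Set.mem_setOf_eq]
    constructor
    · rintro ⟨n, hn⟩
      have hball : ball x (1 / (n + 1)) ⊆ S := by
        intro y hy
        by_contra h
        have h2 : infDist x Sᶜ ≤ dist x y := infDist_le_dist_of_mem (x := x) h
        rw [mem_ball'] at hy
        have : infDist x Sᶜ < 1 / (n + 1) := lt_of_le_of_lt h2 hy
        exact absurd hn (not_le.mpr this)
      exact interior_maximal hball isOpen_ball (mem_ball_self (by positivity))
    · intro hx
      obtain ⟨ε, hε, hball⟩ := Metric.mem_nhds_iff.mp (mem_interior_iff_mem_nhds.mp hx)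
      obtain ⟨n, hn⟩ := exists_nat_one_div_lt hε
      refine ⟨n, ?_⟩
      by_contra h
      push_neg at h
      obtain ⟨y, hy, hdy⟩ := (infDist_lt_iff hne).mp h
      exact hy (hball (mem_ball'.mpr (lt_trans hdy hn)))
  have := tendsto_measure_iUnion_atTop (μ := volume) hmono
  rw [hU] at this
  exact this

/-! ### Euclidean norm lemmas -/

lemma eNorm_nonneg (x : Fin d → ℝ) : 0 ≤ eNorm x := Real.sqrt_nonneg _

lemma abs_coord_le_eNorm (x : Fin d → ℝ) (i : Fin d) : |x i| ≤ eNorm x := by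
  rw [eNorm, ← Real.sqrt_sq_eq_abs]
  exact Real.sqrt_le_sqrt (Finset.single_le_sum (f := fun j => x j ^ 2)
    (fun j _ => sq_nonneg _) (Finset.mem_univ i))

lemma norm_le_eNorm (x : Fin d → ℝ) : ‖x‖ ≤ eNorm x := by
  refine (pi_norm_le_iff_of_nonneg (eNorm_nonneg x)).mpr fun i => ?_
  rw [Real.norm_eq_abs]
  exact abs_coord_le_eNorm x i

lemma eNorm_smul {t : ℝ} (ht : 0 ≤ t) (x : Fin d → ℝ) : eNorm (t • x) = t * eNorm x := by
  rw [eNorm, eNorm]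
  have h : ∑ i, ((t • x) i) ^ 2 = t ^ 2 * ∑ i, x i ^ 2 := by
    rw [Finset.mul_sum]
    refine Finset.sum_congr rfl fun i _ => ?_
    simp only [Pi.smul_apply, smul_eq_mul]
    ring
  rw [h, Real.sqrt_mul (sq_nonneg t), Real.sqrt_sq ht]

lemma eNorm_pos {x : Fin d → ℝ} (hx : x ≠ 0) : 0 < eNorm x := by
  obtain ⟨i, hi⟩ := Function.ne_iff.mp hx
  apply Real.sqrt_pos.mpr
  have h1 : 0 < x i ^ 2 := pow_two_pos_of_ne_zero hi
  exact lt_of_lt_of_le h1 (Finset.single_le_sum (f := fun j => x j ^ 2)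
    (fun j _ => sq_nonneg _) (Finset.mem_univ i))

lemma vol_le_of_null_union {W A B : Set (Fin d → ℝ)} (h : A ⊆ W ∪ B) (hB : volume B = 0) :
    volume A ≤ volume W :=
  calc volume A ≤ volume (W ∪ B) := measure_mono h
    _ ≤ volume W + volume B := measure_union_le _ _
    _ = volume W := by rw [hB, add_zero]

lemma hyperplane_null : volume (⋃ i, {x : Fin d → ℝ | x i = 0}) = 0 := by
  refine measure_iUnion_null fun i => ?_
  have h1 : {x : Fin d → ℝ | x i = 0} =
      Set.univ.pi (fun j => if j = i then ({0} : Set ℝ) else Set.univ) := by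
    ext x
    simp only [Set.mem_setOf_eq, Set.mem_pi, Set.mem_univ, forall_true_left]
    constructor
    · intro hx j
      by_cases hji : j = i
      · subst hji
        simp only [if_pos rfl, Set.mem_singleton_iff]
        exact hx
      · simp only [if_neg hji, Set.mem_univ]
    · intro hx
      have h2 := hx i
      simpa using h2
  rw [h1, volume_pi_pi]
  refine Finset.prod_eq_zero (Finset.mem_univ i) ?_
  simp

set_option maxHeartbeats 4000000 in
/-- Lemma 2.2 (Lemma 4 of the quasi-optimal analysis): `0 < |P| < ∞`, and if `P` is
Jordan measurable then `|P| = lim_{τ→∞} τ^{−d} · #(P_τ ∩ ℤ^d)`. -/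
theorem stmt1 {d : ℕ} (hd : 1 ≤ d) (b : (Fin d → ℝ) → ℝ) (hb : AssumptionA b)
    (P : Set (Fin d → ℝ))
    (hPinc : IsIncreasingCase b → P = ⋂ τ ∈ Set.Ioi (0 : ℝ), τ⁻¹ • Pset b τ)
    (hPdec : IsDecreasingCase b → P = ⋃ τ ∈ Set.Ioi (0 : ℝ), τ⁻¹ • Pset b τ) :
    0 < volume P ∧ volume P < ⊤ ∧
      (volume (frontier P) = 0 →
        Tendsto (fun τ : ℝ => ((Pset b τ ∩ latticePoints d).ncard : ℝ) / τ ^ d)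
          atTop (nhds (volume P).toReal)) := by
  classical
  obtain ⟨hb0, hbc, hmc, c, C, hc0, hcC, R, hR⟩ := hb
  have hC0 : 0 < C := hc0.trans hcC
  have hd0 : (0:ℝ) < d := by exact_mod_cast Nat.lt_of_lt_of_le Nat.zero_lt_one hd
  have hsd : 0 < Real.sqrt d := Real.sqrt_pos.mpr hd0
  -- Pset is bounded and closed
  have Pset_bounded : ∀ τ : ℝ, IsBounded (Pset b τ) := by
    intro τ
    refine Metric.isBounded_closedBall.subset (?_ : Pset b τ ⊆ Metric.closedBall 0 (max R (τ / c)))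
    intro x hx
    rw [Metric.mem_closedBall, dist_zero_right]
    refine (norm_le_eNorm x).trans ?_
    rcases le_total R (eNorm x) with h | h
    · have h2 := (hR x hx.1 h).1.trans hx.2
      refine le_max_of_le_right ((le_div_iff₀ hc0).mpr ?_)
      linarith [mul_comm c (eNorm x)]
    · exact le_max_of_le_left h
  have orth_closed : IsClosed {x : Fin d → ℝ | ∀ i, 0 ≤ x i} := by
    have horth : {x : Fin d → ℝ | ∀ i, 0 ≤ x i} = ⋂ i, {x : Fin d → ℝ | 0 ≤ x i} := by
      ext x; simp
    rw [horth]
    exact isClosed_iInter fun i => isClosed_le continuous_const (continuous_apply i)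
  have Pset_closed : ∀ τ : ℝ, IsClosed (Pset b τ) := by
    intro τ
    have h1 : Pset b τ = {x : Fin d → ℝ | ∀ i, 0 ≤ x i} ∩ b ⁻¹' (Set.Iic τ) := by
      ext x; simp [Pset, Set.mem_setOf_eq]
    rw [h1]
    exact hbc.preimage_isClosed_of_isClosed orth_closed isClosed_Iic
  set Q : ℝ → Set (Fin d → ℝ) := fun σ => σ⁻¹ • Pset b σ with hQdef
  have mem_Q_iff : ∀ {σ : ℝ}, 0 < σ → ∀ {x : Fin d → ℝ},
      (x ∈ Q σ ↔ (∀ i, 0 ≤ x i) ∧ b (σ • x) ≤ σ) := by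
    intro σ hσ x
    rw [hQdef]
    simp only
    rw [Set.mem_smul_set_iff_inv_smul_mem₀ (inv_ne_zero hσ.ne'), inv_inv]
    constructor
    · rintro ⟨h1, h2⟩
      refine ⟨fun i => ?_, h2⟩
      have h3 := h1 i
      rw [Pi.smul_apply, smul_eq_mul] at h3
      nlinarith [hσ]
    · rintro ⟨h1, h2⟩
      refine ⟨fun i => ?_, h2⟩
      rw [Pi.smul_apply, smul_eq_mul]
      exact mul_nonneg hσ.le (h1 i)
  have Q_bounded : ∀ {σ : ℝ}, IsBounded (Q σ) := fun {σ} => (Pset_bounded σ).smul₀ σ⁻¹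
  have Q_closed : ∀ {σ : ℝ}, 0 < σ → IsClosed (Q σ) :=
    fun {σ} hσ => (Pset_closed σ).smul_of_ne_zero (inv_ne_zero hσ.ne')
  have Pset_eq_smul_Q : ∀ {τ : ℝ}, 0 < τ → Pset b τ = τ • Q τ := by
    intro τ hτ
    rw [hQdef]
    simp only
    rw [smul_inv_smul₀ hτ.ne']
  -- Monotonicity of the Q family
  have Qanti : IsIncreasingCase b → ∀ {σ τ : ℝ}, 0 < σ → σ ≤ τ → Q τ ⊆ Q σ := by
    intro hm σ τ hσ hστ x hx
    have hτ : 0 < τ := lt_of_lt_of_le hσ hστ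
    rw [mem_Q_iff hτ] at hx
    rw [mem_Q_iff hσ]
    refine ⟨hx.1, ?_⟩
    have h1 : b (τ • x) / τ ≤ 1 := (div_le_one hτ).mpr hx.2
    have h2 := hm x hx.1 (Set.mem_Ioi.mpr hσ) (Set.mem_Ioi.mpr hτ) hστ
    exact (div_le_one hσ).mp (h2.trans h1)
  have Qmono : IsDecreasingCase b → ∀ {σ τ : ℝ}, 0 < σ → σ ≤ τ → Q σ ⊆ Q τ := by
    intro hm σ τ hσ hστ x hx
    have hτ : 0 < τ := lt_of_lt_of_le hσ hστ
    rw [mem_Q_iff hσ] at hx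
    rw [mem_Q_iff hτ]
    refine ⟨hx.1, ?_⟩
    have h1 : b (σ • x) / σ ≤ 1 := (div_le_one hσ).mpr hx.2
    have h2 := hm x hx.1 (Set.mem_Ioi.mpr hσ) (Set.mem_Ioi.mpr hτ) hστ
    exact (div_le_one hτ).mp (h2.trans h1)
  -- Points with small Euclidean norm are eventually in all Q τ
  have bound_above : ∀ x : Fin d → ℝ, (∀ i, 0 ≤ x i) → eNorm x ≤ 1 / C →
      ∃ T : ℝ, 0 < T ∧ ∀ T' ≥ T, b (T' • x) ≤ T' := by
    intro x hx hxC
    by_cases hx0 : x = 0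
    · exact ⟨1, one_pos, fun T' hT' => by rw [hx0, smul_zero, hb0]; linarith⟩
    · have hex : 0 < eNorm x := eNorm_pos hx0
      refine ⟨max 1 (R / eNorm x), lt_max_of_lt_left one_pos, fun T' hT' => ?_⟩
      have hT'0 : 0 < T' := lt_of_lt_of_le (lt_max_of_lt_left one_pos) hT'
      have hnonneg : ∀ i, 0 ≤ (T' • x) i := by
        intro i
        rw [Pi.smul_apply, smul_eq_mul]
        exact mul_nonneg hT'0.le (hx i)
      have hRT : R ≤ eNorm (T' • x) := by
        rw [eNorm_smul hT'0.le]
        have h1 : R / eNorm x ≤ T' := le_trans (le_max_right _ _) hT'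
        calc R = (R / eNorm x) * eNorm x := by field_simp
          _ ≤ T' * eNorm x := mul_le_mul_of_nonneg_right h1 hex.le
      have h2 := (hR _ hnonneg hRT).2
      calc b (T' • x) ≤ C * eNorm (T' • x) := h2
        _ = T' * (C * eNorm x) := by rw [eNorm_smul hT'0.le]; ring
        _ ≤ T' * (C * (1 / C)) :=
            mul_le_mul_of_nonneg_left (mul_le_mul_of_nonneg_left hxC hC0.le) hT'0.le
        _ = T' := by field_simp
  -- The small cube K
  set a : ℝ := 1 / (C * Real.sqrt d) with ha
  have ha0 : 0 < a := by rw [ha]; positivity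
  set K : Set (Fin d → ℝ) := Set.univ.pi fun _ => Set.Icc 0 a with hK
  have hKe : ∀ x ∈ K, (∀ i, 0 ≤ x i) ∧ eNorm x ≤ 1 / C := by
    intro x hxK
    have h1 : ∀ i, 0 ≤ x i ∧ x i ≤ a := fun i => hxK i (Set.mem_univ i)
    refine ⟨fun i => (h1 i).1, ?_⟩
    have h2 : ∑ i, x i ^ 2 ≤ (d : ℝ) * a ^ 2 := by
      calc ∑ i, x i ^ 2 ≤ ∑ _i : Fin d, a ^ 2 :=
            Finset.sum_le_sum fun i _ => by nlinarith [(h1 i).1, (h1 i).2]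
        _ = (d : ℝ) * a ^ 2 := by
            rw [Finset.sum_const, Finset.card_univ, Fintype.card_fin, nsmul_eq_mul]
    calc eNorm x = Real.sqrt (∑ i, x i ^ 2) := rfl
      _ ≤ Real.sqrt ((d : ℝ) * a ^ 2) := Real.sqrt_le_sqrt h2
      _ = Real.sqrt d * a := by
          rw [Real.sqrt_mul (by positivity), Real.sqrt_sq ha0.le]
      _ = 1 / C := by
          rw [ha]
          field_simp
  have hvolK : 0 < volume K := by
    rw [hK, volume_pi_pi]
    simp only [Real.volume_Icc, sub_zero]
    rw [Finset.prod_const, Finset.card_univ, Fintype.card_fin]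
    exact ENNReal.pow_pos (ENNReal.ofReal_pos.mpr ha0) d
  -- Norm bound for elements of Q τ with τ large
  have key_norm : ∀ {x : Fin d → ℝ}, x ≠ 0 → ∀ {τ : ℝ}, 0 < τ → R / eNorm x ≤ τ →
      x ∈ Q τ → eNorm x ≤ 1 / c := by
    intro x hx0 τ hτ hRτ hxQ
    have hex := eNorm_pos hx0
    rw [mem_Q_iff hτ] at hxQ
    have hnonneg : ∀ i, 0 ≤ (τ • x) i := by
      intro i
      rw [Pi.smul_apply, smul_eq_mul]
      exact mul_nonneg hτ.le (hxQ.1 i)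
    have hRe : R ≤ eNorm (τ • x) := by
      rw [eNorm_smul hτ.le]
      calc R = (R / eNorm x) * eNorm x := by field_simp
        _ ≤ τ * eNorm x := mul_le_mul_of_nonneg_right hRτ hex.le
    have h1 := (hR _ hnonneg hRe).1
    rw [eNorm_smul hτ.le] at h1
    have h2 : c * (τ * eNorm x) ≤ τ := h1.trans hxQ.2
    have h3 : τ * (c * eNorm x) ≤ τ * 1 := by nlinarith
    have h4 : c * eNorm x ≤ 1 := le_of_mul_le_mul_left h3 hτ
    exact (le_div_iff₀ hc0).mpr (by linarith [mul_comm c (eNorm x)])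
  -- measure of interior and closure under Jordan measurability
  have hIntVol : ∀ (hfr : volume (frontier P) = 0), volume (interior P) = volume P := by
    intro hfr
    apply le_antisymm (measure_mono interior_subset)
    calc volume P ≤ volume (closure P) := measure_mono subset_closure
      _ = volume (interior P ∪ frontier P) := by rw [closure_eq_interior_union_frontier]
      _ ≤ volume (interior P) + volume (frontier P) := measure_union_le _ _
      _ = volume (interior P) := by rw [hfr, add_zero]
  have hClosVol : ∀ (hfr : volume (frontier P) = 0), volume (closure P) ≤ volume P := by
    intro hfr
    calc volume (closure P) = volume (interior P ∪ frontier P) := by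
          rw [closure_eq_interior_union_frontier]
      _ ≤ volume (interior P) + volume (frontier P) := measure_union_le _ _
      _ = volume (interior P) := by rw [hfr, add_zero]
      _ ≤ volume P := measure_mono interior_subset
  rcases hmc with hm | hm
  · -- Increasing case
    have hP := hPinc hm
    have hPQ : ∀ {τ : ℝ}, 0 < τ → P ⊆ Q τ := by
      intro τ hτ x hx
      rw [hP] at hx
      exact Set.mem_iInter₂.mp hx τ hτ
    have hKP : K ⊆ P := by
      intro x hx
      obtain ⟨hx1, hx2⟩ := hKe x hx
      obtain ⟨T, hT0, hT⟩ := bound_above x hx1 hx2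
      rw [hP, Set.mem_iInter₂]
      intro τ hτ
      rw [Set.mem_Ioi] at hτ
      show x ∈ Q τ
      rw [mem_Q_iff hτ]
      refine ⟨hx1, ?_⟩
      set T' := max τ T with hT'
      have hT'τ : 0 < T' := lt_max_of_lt_left hτ
      have h1 : b (T' • x) ≤ T' := hT T' (le_max_right _ _)
      have h2 := hm x hx1 (Set.mem_Ioi.mpr hτ) (Set.mem_Ioi.mpr hT'τ) (le_max_left _ _)
      have h3 : b (T' • x) / T' ≤ 1 := (div_le_one hT'τ).mpr h1
      exact (div_le_one hτ).mp (h2.trans h3)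
    have hPball : P ⊆ Metric.closedBall 0 (1 / c) := by
      intro x hx
      rw [Metric.mem_closedBall, dist_zero_right]
      by_cases hx0 : x = 0
      · rw [hx0, norm_zero]
        positivity
      · refine (norm_le_eNorm x).trans ?_
        have hex := eNorm_pos hx0
        set τ := max 1 (R / eNorm x) with hτdef
        have hτ0 : 0 < τ := lt_max_of_lt_left one_pos
        exact key_norm hx0 hτ0 (le_max_right _ _) (hPQ hτ0 hx)
    have hPb : IsBounded P := Metric.isBounded_closedBall.subset hPball
    have hPfin : volume P ≠ ⊤ := hPb.measure_lt_top.ne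
    refine ⟨lt_of_lt_of_le hvolK (measure_mono hKP), hPb.measure_lt_top, ?_⟩
    intro hfr
    set v := (volume P).toReal with hv
    -- the decreasing approximating sequence
    set s : ℕ → Set (Fin d → ℝ) := fun n => Q ((n : ℝ) + 1) with hs
    have hspos : ∀ n : ℕ, (0:ℝ) < (n : ℝ) + 1 := fun n => by positivity
    have hsanti : Antitone s := by
      intro n m hnm
      have : ((n : ℝ) + 1) ≤ ((m : ℝ) + 1) := by
        have : (n : ℝ) ≤ m := by exact_mod_cast hnm
        linarith
      exact Qanti hm (hspos n) this
    have hsint : (⋂ n : ℕ, s n) = P := by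
      apply Set.Subset.antisymm
      · intro x hx
        rw [hP, Set.mem_iInter₂]
        intro τ hτ
        rw [Set.mem_Ioi] at hτ
        obtain ⟨n, hn⟩ := exists_nat_ge τ
        exact Qanti hm hτ (hn.trans (by linarith)) (Set.mem_iInter.mp hx n)
      · intro x hx
        exact Set.mem_iInter.mpr fun n => hPQ (hspos n) hx
    have hIT : Tendsto (fun n : ℕ => volume (s n)) atTop (nhds (volume P)) := by
      have h := tendsto_measure_iInter_atTop (μ := volume)
        (fun n => (Q_closed (hspos n)).measurableSet.nullMeasurableSet) hsanti
        ⟨0, Q_bounded.measure_lt_top.ne⟩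
      rw [hsint] at h
      exact h
    have hITr : Tendsto (fun n : ℕ => (volume (s n)).toReal) atTop (nhds v) :=
      (ENNReal.tendsto_toReal hPfin).comp hIT
    rw [Metric.tendsto_nhds]
    intro ε hε
    -- choose the outer approximation
    obtain ⟨n, hn⟩ := (hITr.eventually_lt_const
      (show v < v + ε / 2 by linarith)).exists
    have hSb : IsBounded (s n) := Q_bounded
    have hth := tendsto_measure_thickening (μ := volume)
      ⟨1, one_pos, hSb.thickening.measure_lt_top.ne⟩
    rw [(Q_closed (hspos n)).closure_eq] at hth
    have hthr : Tendsto (fun r => (volume (Metric.thickening r (s n))).toReal)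
        (nhdsWithin 0 (Set.Ioi 0)) (nhds (volume (s n)).toReal) :=
      (ENNReal.tendsto_toReal hSb.measure_lt_top.ne).comp hth
    obtain ⟨δ, hδlt, hδmem⟩ := ((hthr.eventually_lt_const hn).and self_mem_nhdsWithin).exists
    have hδ0 : (0:ℝ) < δ := hδmem
    -- choose the inner approximation
    have hE := tendsto_E hd hPb
    rw [hIntVol hfr] at hE
    have hEr : Tendsto (fun m : ℕ =>
        (volume {x : Fin d → ℝ | 1 / (m + 1) ≤ Metric.infDist x Pᶜ}).toReal) atTop (nhds v) :=
      (ENNReal.tendsto_toReal hPfin).comp hE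
    obtain ⟨m, hmlt⟩ := (hEr.eventually_const_lt
      (show v - ε / 2 < v by linarith)).exists
    filter_upwards [eventually_ge_atTop (max ((n : ℝ) + 1) (max ((m : ℝ) + 1) (1 / δ)))]
    intro τ hτ
    have hτ1 : ((n : ℝ) + 1) ≤ τ := le_trans (le_max_left _ _) hτ
    have hτ2 : ((m : ℝ) + 1) ≤ τ := le_trans (le_max_left _ _) (le_trans (le_max_right _ _) hτ)
    have hτ3 : 1 / δ ≤ τ := le_trans (le_max_right _ _) (le_trans (le_max_right _ _) hτ)
    have hτ0 : 0 < τ := lt_of_lt_of_le (hspos n) hτ1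
    have hτd : (0:ℝ) < τ ^ d := by positivity
    set N := (Pset b τ ∩ latticePoints d).ncard with hN
    -- upper bound
    have hub : (N : ℝ) ≤ τ ^ d * (volume (Metric.thickening δ (s n))).toReal := by
      have hsub : Pset b τ ⊆ τ • s n := by
        rw [Pset_eq_smul_Q hτ0]
        exact Set.smul_set_mono (Qanti hm (hspos n) hτ1)
      have hcard : (N : ℝ≥0∞) ≤ (((τ • s n) ∩ latticePoints d).ncard : ℝ≥0∞) := by
        have := Set.ncard_le_ncard (Set.inter_subset_inter_left (latticePoints d) hsub)
          (latticeFinite (hSb.smul₀ τ))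
        exact_mod_cast this
      have hδτ : 1 / τ ≤ δ := by
        have h1 : 1 / τ ≤ 1 / (1 / δ) := one_div_le_one_div_of_le (by positivity) hτ3
        rwa [one_div_one_div] at h1
      have h2 := hcard.trans (count_upper hSb hτ0 hδτ)
      have h3 := ENNReal.toReal_mono
        (ENNReal.mul_ne_top ENNReal.ofReal_ne_top
          (hSb.thickening (δ := δ)).measure_lt_top.ne) h2
      rwa [ENNReal.toReal_natCast, ENNReal.toReal_mul, ENNReal.toReal_ofReal hτd.le] at h3
    -- lower bound
    have hlb : τ ^ d * (volume {x : Fin d → ℝ | 1 / (m + 1) ≤ Metric.infDist x Pᶜ}).toReal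
        ≤ (N : ℝ) := by
      have hsub : τ • P ⊆ Pset b τ := by
        rw [Pset_eq_smul_Q hτ0]
        exact Set.smul_set_mono (hPQ hτ0)
      have hδτ : 1 / τ ≤ 1 / ((m : ℝ) + 1) := one_div_le_one_div_of_le (by positivity) hτ2
      have h2 := (count_lower hPb hτ0 hδτ).trans
        (show ((((τ • P)) ∩ latticePoints d).ncard : ℝ≥0∞) ≤ (N : ℝ≥0∞) by
          exact_mod_cast Set.ncard_le_ncard
            (Set.inter_subset_inter_left (latticePoints d) hsub)
            (latticeFinite (Pset_bounded τ)))
      have h3 := ENNReal.toReal_mono (by simp) h2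
      rwa [ENNReal.toReal_mul, ENNReal.toReal_ofReal hτd.le, ENNReal.toReal_natCast] at h3
    have hup : (N : ℝ) / τ ^ d < v + ε / 2 := by
      rw [div_lt_iff₀ hτd]
      calc (N : ℝ) ≤ τ ^ d * (volume (Metric.thickening δ (s n))).toReal := hub
        _ < τ ^ d * (v + ε / 2) := mul_lt_mul_of_pos_left hδlt hτd
        _ = (v + ε / 2) * τ ^ d := by ring
    have hdown : v - ε / 2 < (N : ℝ) / τ ^ d := by
      rw [lt_div_iff₀ hτd]
      calc (v - ε / 2) * τ ^ d
          < (volume {x : Fin d → ℝ | 1 / (m + 1) ≤ Metric.infDist x Pᶜ}).toReal * τ ^ d :=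
            mul_lt_mul_of_pos_right hmlt hτd
        _ = τ ^ d * (volume {x : Fin d → ℝ | 1 / (m + 1) ≤ Metric.infDist x Pᶜ}).toReal := by
            ring
        _ ≤ (N : ℝ) := hlb
    rw [Real.dist_eq, abs_sub_lt_iff]
    constructor <;> linarith
  · -- Decreasing case
    have hP := hPdec hm
    have hQP : ∀ {τ : ℝ}, 0 < τ → Q τ ⊆ P := by
      intro τ hτ x hx
      rw [hP]
      exact Set.mem_biUnion hτ hx
    have hKP : K ⊆ P := by
      intro x hx
      obtain ⟨hx1, hx2⟩ := hKe x hx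
      obtain ⟨T, hT0, hT⟩ := bound_above x hx1 hx2
      refine hQP hT0 ?_
      rw [mem_Q_iff hT0]
      exact ⟨hx1, hT T le_rfl⟩
    have hPball : P ⊆ Metric.closedBall 0 (1 / c) := by
      intro x hx
      rw [Metric.mem_closedBall, dist_zero_right]
      by_cases hx0 : x = 0
      · rw [hx0, norm_zero]
        positivity
      · refine (norm_le_eNorm x).trans ?_
        rw [hP] at hx
        obtain ⟨σ, hσ, hxσ⟩ := Set.mem_iUnion₂.mp hx
        rw [Set.mem_Ioi] at hσ
        have hτ0 : 0 < max σ (R / eNorm x) := lt_of_lt_of_le hσ (le_max_left _ _)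
        exact key_norm hx0 hτ0 (le_max_right _ _) (Qmono hm hσ (le_max_left _ _) hxσ)
    have hPb : IsBounded P := Metric.isBounded_closedBall.subset hPball
    have hPfin : volume P ≠ ⊤ := hPb.measure_lt_top.ne
    refine ⟨lt_of_lt_of_le hvolK (measure_mono hKP), hPb.measure_lt_top, ?_⟩
    intro hfr
    set v := (volume P).toReal with hv
    -- the increasing approximating sequence
    set s : ℕ → Set (Fin d → ℝ) := fun n => Q ((n : ℝ) + 1) with hs
    have hspos : ∀ n : ℕ, (0:ℝ) < (n : ℝ) + 1 := fun n => by positivity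
    have hsmono : Monotone s := by
      intro n m hnm
      have h1 : ((n : ℝ) + 1) ≤ ((m : ℝ) + 1) := by
        have : (n : ℝ) ≤ m := by exact_mod_cast hnm
        linarith
      exact Qmono hm (hspos n) h1
    have hsuni : (⋃ n : ℕ, s n) = P := by
      apply Set.Subset.antisymm
      · exact Set.iUnion_subset fun n => hQP (hspos n)
      · intro x hx
        rw [hP] at hx
        obtain ⟨σ, hσ, hxσ⟩ := Set.mem_iUnion₂.mp hx
        rw [Set.mem_Ioi] at hσ
        obtain ⟨n, hn⟩ := exists_nat_ge σ
        exact Set.mem_iUnion.mpr ⟨n, Qmono hm hσ (hn.trans (by linarith)) hxσ⟩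
    have hIT : Tendsto (fun n : ℕ => volume (s n)) atTop (nhds (volume P)) := by
      have h := tendsto_measure_iUnion_atTop (μ := volume) hsmono
      rw [hsuni] at h
      exact h
    have hITr : Tendsto (fun n : ℕ => (volume (s n)).toReal) atTop (nhds v) :=
      (ENNReal.tendsto_toReal hPfin).comp hIT
    rw [Metric.tendsto_nhds]
    intro ε hε
    -- outer approximation: thickenings of P itself
    have hclos : volume (closure P) = volume P :=
      le_antisymm (hClosVol hfr) (measure_mono subset_closure)
    have hth := tendsto_measure_thickening (μ := volume)
      ⟨1, one_pos, hPb.thickening.measure_lt_top.ne⟩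
    rw [hclos] at hth
    have hthr : Tendsto (fun r => (volume (Metric.thickening r P)).toReal)
        (nhdsWithin 0 (Set.Ioi 0)) (nhds v) :=
      (ENNReal.tendsto_toReal hPfin).comp hth
    obtain ⟨δ, hδlt, hδmem⟩ := ((hthr.eventually_lt_const
      (show v < v + ε by linarith)).and self_mem_nhdsWithin).exists
    have hδ0 : (0:ℝ) < δ := hδmem
    -- inner approximation: an open set U with large volume
    obtain ⟨m, hmlt⟩ := (hITr.eventually_const_lt
      (show v - ε / 4 < v by linarith)).exists
    set σ' : ℝ := (m : ℝ) + 1 with hσ'def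
    have hσ'0 : 0 < σ' := hspos m
    have hg : Tendsto (fun t : ℝ => (volume (s m)).toReal / t ^ d)
        (nhdsWithin 1 (Set.Ioi 1)) (nhds ((volume (s m)).toReal)) := by
      have h1 : ContinuousAt (fun t : ℝ => (volume (s m)).toReal / t ^ d) 1 :=
        ContinuousAt.div continuousAt_const ((continuous_pow d).continuousAt)
          (by norm_num)
      have h2 : Tendsto (fun t : ℝ => (volume (s m)).toReal / t ^ d)
          (nhdsWithin 1 (Set.Ioi 1)) (nhds ((volume (s m)).toReal / 1 ^ d)) :=
        h1.tendsto.mono_left nhdsWithin_le_nhds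
      simpa using h2
    obtain ⟨t, htlt, htmem⟩ := ((hg.eventually_const_lt
      (show v - ε / 2 < (volume (s m)).toReal by linarith)).and self_mem_nhdsWithin).exists
    have ht1 : (1:ℝ) < t := htmem
    have ht0 : (0:ℝ) < t := lt_trans one_pos ht1
    set σ : ℝ := σ' * t with hσdef
    have hσ0 : 0 < σ := mul_pos hσ'0 ht0
    have hσ'σ : σ' < σ := (lt_mul_iff_one_lt_right hσ'0).mpr ht1
    -- the open set W and U
    set W : Set (Fin d → ℝ) := {x | (∀ i, 0 < x i) ∧ b x < σ} with hW
    have hWopen : IsOpen W := by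
      rw [isOpen_iff_mem_nhds]
      rintro x ⟨hx1, hx2⟩
      have hO : IsOpen {y : Fin d → ℝ | ∀ i, 0 < y i} := by
        have h1 : {y : Fin d → ℝ | ∀ i, 0 < y i} = ⋂ i, {y : Fin d → ℝ | 0 < y i} := by
          ext y; simp
        rw [h1]
        exact isOpen_iInter_of_finite fun i =>
          isOpen_lt continuous_const (continuous_apply i)
      have hOn : {y : Fin d → ℝ | ∀ i, 0 < y i} ∈ nhds x := hO.mem_nhds hx1
      have hcb : ContinuousAt b x :=
        hbc.continuousAt (mem_of_superset hOn (fun y hy i => (hy i).le))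
      filter_upwards [hOn, hcb (Iio_mem_nhds hx2)] with y h1 h2
      exact ⟨h1, h2⟩
    have hWP : W ⊆ Pset b σ := fun x hx => ⟨fun i => (hx.1 i).le, hx.2.le⟩
    set U : Set (Fin d → ℝ) := σ⁻¹ • W with hU
    have hUopen : IsOpen U := hWopen.smul₀ (inv_ne_zero hσ0.ne')
    have hUQ : U ⊆ Q σ := Set.smul_set_mono hWP
    have hUb : IsBounded U := Q_bounded.subset hUQ
    -- volume of U is large
    have hnull : volume (⋃ i, {x : Fin d → ℝ | x i = 0}) = 0 := hyperplane_null
    have hPsetW : Pset b σ' ⊆ W ∪ (⋃ i, {x : Fin d → ℝ | x i = 0}) := by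
      intro x hx
      by_cases h : ∀ i, 0 < x i
      · exact Or.inl ⟨h, lt_of_le_of_lt hx.2 hσ'σ⟩
      · push_neg at h
        obtain ⟨i, hi⟩ := h
        exact Or.inr (Set.mem_iUnion.mpr ⟨i, le_antisymm hi (hx.1 i)⟩)
    have hvolW : volume (Pset b σ') ≤ volume W := vol_le_of_null_union hPsetW hnull
    have hWfin : volume W ≠ ⊤ := ((Pset_bounded σ).subset hWP).measure_lt_top.ne
    have hsmfin : volume (s m) ≠ ⊤ := Q_bounded.measure_lt_top.ne
    have hvolU : (volume (s m)).toReal / t ^ d ≤ (volume U).toReal := by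
      have h1 : (volume U).toReal = σ⁻¹ ^ d * (volume W).toReal := by
        rw [hU, volume_smul _ (inv_nonneg.mpr hσ0.le), ENNReal.toReal_mul,
          ENNReal.toReal_ofReal (by positivity)]
      have h2 : (volume (Pset b σ')).toReal = σ' ^ d * (volume (s m)).toReal := by
        rw [Pset_eq_smul_Q hσ'0, volume_smul _ hσ'0.le, ENNReal.toReal_mul,
          ENNReal.toReal_ofReal (by positivity)]
      have h3 : (volume (Pset b σ')).toReal ≤ (volume W).toReal :=
        ENNReal.toReal_mono hWfin hvolW
      have hratio : σ⁻¹ ^ d * σ' ^ d = 1 / t ^ d := by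
        rw [← mul_pow, one_div, ← inv_pow]
        congr 1
        rw [hσdef, mul_inv]
        field_simp
      calc (volume (s m)).toReal / t ^ d
          = (σ⁻¹ ^ d * σ' ^ d) * (volume (s m)).toReal := by
            rw [hratio]; ring
        _ = σ⁻¹ ^ d * (σ' ^ d * (volume (s m)).toReal) := by ring
        _ = σ⁻¹ ^ d * (volume (Pset b σ')).toReal := by rw [h2]
        _ ≤ σ⁻¹ ^ d * (volume W).toReal := by
            apply mul_le_mul_of_nonneg_left h3 (by positivity)
        _ = (volume U).toReal := h1.symm
    have hUbig : v - ε / 2 < (volume U).toReal := lt_of_lt_of_le htlt hvolU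
    -- inner E-approximation of U
    have hEU := tendsto_E hd hUb
    rw [hUopen.interior_eq] at hEU
    have hEUr : Tendsto (fun k : ℕ =>
        (volume {x : Fin d → ℝ | 1 / (k + 1) ≤ Metric.infDist x Uᶜ}).toReal) atTop
        (nhds (volume U).toReal) :=
      (ENNReal.tendsto_toReal hUb.measure_lt_top.ne).comp hEU
    obtain ⟨k, hklt⟩ := (hEUr.eventually_const_lt hUbig).exists
    -- the eventual bound
    filter_upwards [eventually_ge_atTop (max σ (max ((k : ℝ) + 1) (1 / δ)))]
    intro τ hτ
    have hτ1 : σ ≤ τ := le_trans (le_max_left _ _) hτ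
    have hτ2 : ((k : ℝ) + 1) ≤ τ := le_trans (le_max_left _ _) (le_trans (le_max_right _ _) hτ)
    have hτ3 : 1 / δ ≤ τ := le_trans (le_max_right _ _) (le_trans (le_max_right _ _) hτ)
    have hτ0 : 0 < τ := lt_of_lt_of_le hσ0 hτ1
    have hτd : (0:ℝ) < τ ^ d := by positivity
    set N := (Pset b τ ∩ latticePoints d).ncard with hN
    -- upper bound
    have hub : (N : ℝ) ≤ τ ^ d * (volume (Metric.thickening δ P)).toReal := by
      have hsub : Pset b τ ⊆ τ • P := by
        rw [Pset_eq_smul_Q hτ0]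
        exact Set.smul_set_mono (hQP hτ0)
      have hcard : (N : ℝ≥0∞) ≤ (((τ • P) ∩ latticePoints d).ncard : ℝ≥0∞) := by
        have := Set.ncard_le_ncard (Set.inter_subset_inter_left (latticePoints d) hsub)
          (latticeFinite (hPb.smul₀ τ))
        exact_mod_cast this
      have hδτ : 1 / τ ≤ δ := by
        have h1 : 1 / τ ≤ 1 / (1 / δ) := one_div_le_one_div_of_le (by positivity) hτ3
        rwa [one_div_one_div] at h1
      have h2 := hcard.trans (count_upper hPb hτ0 hδτ)
      have h3 := ENNReal.toReal_mono
        (ENNReal.mul_ne_top ENNReal.ofReal_ne_top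
          (hPb.thickening (δ := δ)).measure_lt_top.ne) h2
      rwa [ENNReal.toReal_natCast, ENNReal.toReal_mul, ENNReal.toReal_ofReal hτd.le] at h3
    -- lower bound
    have hlb : τ ^ d * (volume {x : Fin d → ℝ | 1 / (k + 1) ≤ Metric.infDist x Uᶜ}).toReal
        ≤ (N : ℝ) := by
      have hsub : τ • U ⊆ Pset b τ := by
        rw [Pset_eq_smul_Q hτ0]
        exact Set.smul_set_mono (hUQ.trans (Qmono hm hσ0 hτ1))
      have hδτ : 1 / τ ≤ 1 / ((k : ℝ) + 1) := one_div_le_one_div_of_le (by positivity) hτ2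
      have h2 := (count_lower hUb hτ0 hδτ).trans
        (show ((((τ • U)) ∩ latticePoints d).ncard : ℝ≥0∞) ≤ (N : ℝ≥0∞) by
          exact_mod_cast Set.ncard_le_ncard
            (Set.inter_subset_inter_left (latticePoints d) hsub)
            (latticeFinite (Pset_bounded τ)))
      have h3 := ENNReal.toReal_mono (by simp) h2
      rwa [ENNReal.toReal_mul, ENNReal.toReal_ofReal hτd.le, ENNReal.toReal_natCast] at h3
    have hup : (N : ℝ) / τ ^ d < v + ε := by
      rw [div_lt_iff₀ hτd]
      calc (N : ℝ) ≤ τ ^ d * (volume (Metric.thickening δ P)).toReal := hub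
        _ < τ ^ d * (v + ε) := mul_lt_mul_of_pos_left hδlt hτd
        _ = (v + ε) * τ ^ d := by ring
    have hdown : v - ε / 2 < (N : ℝ) / τ ^ d := by
      rw [lt_div_iff₀ hτd]
      calc (v - ε / 2) * τ ^ d
          < (volume {x : Fin d → ℝ | 1 / (k + 1) ≤ Metric.infDist x Uᶜ}).toReal * τ ^ d :=
            mul_lt_mul_of_pos_right hklt hτd
        _ = τ ^ d * (volume {x : Fin d → ℝ | 1 / (k + 1) ≤ Metric.infDist x Uᶜ}).toReal := by
            ring
        _ ≤ (N : ℝ) := hlb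
    rw [Real.dist_eq, abs_sub_lt_iff]
    constructor <;> linarith


end
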